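/- Let H be a symmetric numerical semigroup with e(H) < m(H). Then e(H) = m(H) − 1 if and only if H* is almost symmetric with t(H*) ≥ 2. -/

import Mathlib

/-- A numerical semigroup, viewed as a set of integers: a set of nonnegative
integers containing 0, closed under addition, with finite complement in ℕ. -/
def IsNumericalSemigroup (S : Set ℤ) : Prop :=
  (∀ x ∈ S, 0 ≤ x) ∧ 0 ∈ S ∧ (∀ a ∈ S, ∀ b ∈ S, a + b ∈ S) ∧
    {z : ℤ | 0 ≤ z ∧ z ∉ S}.Finite

/-- The genus: the number of nonnegative integers not in `S`. -/
noncomputable def genus (S : Set ℤ) : ℕ := {z : ℤ | 0 ≤ z ∧ z ∉ S}.ncard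

/-- The Frobenius number: the largest integer not in `S`. -/
noncomputable def frob (S : Set ℤ) : ℤ := sSup {z : ℤ | z ∉ S}

/-- The set of pseudo-Frobenius numbers. -/
def PF (S : Set ℤ) : Set ℤ := {x : ℤ | x ∉ S ∧ ∀ h ∈ S, h ≠ 0 → x + h ∈ S}

/-- The type: the number of pseudo-Frobenius numbers. -/
noncomputable def typ (S : Set ℤ) : ℕ := (PF S).ncard

/-- The multiplicity: the smallest nonzero element of `S`. -/
noncomputable def mult (S : Set ℤ) : ℤ := sInf {z : ℤ | z ∈ S ∧ z ≠ 0}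

/-- The Apéry set of `S` with respect to `n`. -/
def apery (S : Set ℤ) (n : ℤ) : Set ℤ := {s ∈ S | s - n ∉ S}

/-- The dual `H* = M - M` of the maximal ideal `M = S \ {0}`. -/
def dual (S : Set ℤ) : Set ℤ :=
  {z : ℤ | ∀ m ∈ S, m ≠ 0 → z + m ∈ S ∧ z + m ≠ 0}

/-- Almost symmetric: `2 g(S) = F(S) + t(S)`. -/
def AlmostSymmetric (S : Set ℤ) : Prop := 2 * (genus S : ℤ) = frob S + (typ S : ℤ)

/-- Symmetric: `2 g(S) = F(S) + 1`. -/
def SymmetricNS (S : Set ℤ) : Prop := 2 * (genus S : ℤ) = frob S + 1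

/-- Pseudo-symmetric: `2 g(S) = F(S) + 2`. -/
def PseudoSymmetric (S : Set ℤ) : Prop := 2 * (genus S : ℤ) = frob S + 2

/-- The set of minimal generators of `S`: nonzero elements not expressible as the
sum of two nonzero elements of `S`. -/
def minGens (S : Set ℤ) : Set ℤ :=
  {x ∈ S | x ≠ 0 ∧ ∀ a ∈ S, ∀ b ∈ S, a ≠ 0 → b ≠ 0 → x ≠ a + b}

/-- The embedding dimension: the number of minimal generators. -/
noncomputable def embdim (S : Set ℤ) : ℕ := (minGens S).ncard

/-- The gluing `⟨x S₁, y S₂⟩` of two numerical semigroups. -/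
def glue (x y : ℤ) (S₁ S₂ : Set ℤ) : Set ℤ :=
  {z : ℤ | ∃ a ∈ S₁, ∃ b ∈ S₂, z = x * a + y * b}

lemma frob_spec {S : Set ℤ} (hS : IsNumericalSemigroup S) :
    frob S ∉ S ∧ ∀ z : ℤ, z ∉ S → z ≤ frob S := by
  obtain ⟨hnn, h0, hadd, hfin⟩ := hS
  have hone : (-1 : ℤ) ∉ S := fun h => absurd (hnn _ h) (by norm_num)
  have hbdd : ∃ b : ℤ, ∀ z : ℤ, z ∉ S → z ≤ b := by
    obtain ⟨t, ht⟩ := hfin.bddAbove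
    refine ⟨max t 0, fun z hz => ?_⟩
    rcases le_or_gt z 0 with h | h
    · exact le_trans h (le_max_right _ _)
    · exact le_trans (ht ⟨le_of_lt h, hz⟩) (le_max_left _ _)
  obtain ⟨ub, hub, hmax⟩ := Int.exists_greatest_of_bdd hbdd ⟨-1, hone⟩
  have heq : frob S = ub := IsGreatest.csSup_eq ⟨hub, fun z hz => hmax z hz⟩
  rw [heq]; exact ⟨hub, hmax⟩

lemma mult_spec {S : Set ℤ} (hS : IsNumericalSemigroup S) :
    mult S ∈ S ∧ mult S ≠ 0 ∧ ∀ z ∈ S, z ≠ 0 → mult S ≤ z := by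
  obtain ⟨hF, hFmax⟩ := frob_spec hS
  have hm1 : (-1:ℤ) ∉ S := fun h => absurd (hS.1 _ h) (by norm_num)
  have hFge : (-1:ℤ) ≤ frob S := hFmax _ hm1
  have hmem : frob S + 2 ∈ S := by
    by_contra h; have := hFmax _ h; omega
  have hne : frob S + 2 ≠ 0 := by omega
  have hbdd : ∃ b : ℤ, ∀ z : ℤ, (z ∈ S ∧ z ≠ 0) → b ≤ z := ⟨0, fun z hz => hS.1 _ hz.1⟩
  obtain ⟨lb, hlb, hmin⟩ := Int.exists_least_of_bdd hbdd ⟨frob S + 2, hmem, hne⟩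
  have heq : mult S = lb := IsLeast.csInf_eq ⟨hlb, fun z hz => hmin z hz⟩
  rw [heq]; exact ⟨hlb.1, hlb.2, fun z hz h0 => hmin z ⟨hz, h0⟩⟩

lemma symm_iff {S : Set ℤ} (hS : IsNumericalSemigroup S) (hsym : SymmetricNS S) :
    ∀ z : ℤ, 0 ≤ z → z ≤ frob S → (z ∈ S ↔ frob S - z ∉ S) := by
  obtain ⟨hFnot, hFmax⟩ := frob_spec hS
  have hFneg : -1 ≤ frob S := hFmax _ (fun h => absurd (hS.1 _ h) (by norm_num))
  have hBfin : {z : ℤ | 0 ≤ z ∧ z ∉ S}.Finite := hS.2.2.2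
  have hAfin : (S ∩ Set.Icc 0 (frob S)).Finite :=
    (Set.finite_Icc 0 (frob S)).subset Set.inter_subset_right
  have hBsub : {z : ℤ | 0 ≤ z ∧ z ∉ S} ⊆ Set.Icc 0 (frob S) :=
    fun z hz => ⟨hz.1, hFmax _ hz.2⟩
  have hunion : Set.Icc 0 (frob S) = (S ∩ Set.Icc 0 (frob S)) ∪ {z : ℤ | 0 ≤ z ∧ z ∉ S} := by
    ext z; constructor
    · intro hz; by_cases h : z ∈ S
      · exact Or.inl ⟨h, hz⟩
      · exact Or.inr ⟨hz.1, h⟩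
    · rintro (hz | hz)
      · exact hz.2
      · exact hBsub hz
  have hdisj : Disjoint (S ∩ Set.Icc 0 (frob S)) {z : ℤ | 0 ≤ z ∧ z ∉ S} :=
    Set.disjoint_left.mpr (fun z hz hz' => hz'.2 hz.1)
  have hcard : (Set.Icc (0:ℤ) (frob S)).ncard
      = (S ∩ Set.Icc 0 (frob S)).ncard + {z : ℤ | 0 ≤ z ∧ z ∉ S}.ncard := by
    conv_lhs => rw [hunion]
    exact Set.ncard_union_eq hdisj hAfin hBfin
  have hIcc : (Set.Icc (0:ℤ) (frob S)).ncard = (frob S + 1).toNat := by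
    rw [← Finset.coe_Icc, Set.ncard_coe_finset, Int.card_Icc]
    norm_num
  have hg : {z : ℤ | 0 ≤ z ∧ z ∉ S}.ncard = genus S := rfl
  have hsym' : 2 * (genus S : ℤ) = frob S + 1 := hsym
  rw [hIcc, hg] at hcard
  have hAcard : ((S ∩ Set.Icc 0 (frob S)).ncard : ℤ) = (genus S : ℤ) := by omega
  have himg : (fun z => frob S - z) '' (S ∩ Set.Icc 0 (frob S)) ⊆ {z : ℤ | 0 ≤ z ∧ z ∉ S} := by
    rintro _ ⟨z, hz, rfl⟩
    have h1 : z ≤ frob S := hz.2.2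
    refine ⟨by simp only [sub_nonneg]; exact h1, fun h => hFnot ?_⟩
    have h2 := hS.2.2.1 _ hz.1 _ h
    have h3 : z + (frob S - z) = frob S := by ring
    rwa [h3] at h2
  have hinj : Set.InjOn (fun z => frob S - z) (S ∩ Set.Icc 0 (frob S)) :=
    fun a _ b _ h => by dsimp at h; omega
  have hicard := Set.ncard_image_of_injOn hinj
  have himgeq : (fun z => frob S - z) '' (S ∩ Set.Icc 0 (frob S)) = {z : ℤ | 0 ≤ z ∧ z ∉ S} := by
    apply Set.eq_of_subset_of_ncard_le himg _ hBfin
    rw [hicard]; omega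
  intro z h0 hFz
  constructor
  · intro hz hcon
    have h2 := hS.2.2.1 _ hz _ hcon
    have h3 : z + (frob S - z) = frob S := by ring
    rw [h3] at h2
    exact hFnot h2
  · intro hz
    by_contra hzS
    have hzB : z ∈ {z : ℤ | 0 ≤ z ∧ z ∉ S} := ⟨h0, hzS⟩
    rw [← himgeq] at hzB
    obtain ⟨a, ha, hae⟩ := hzB
    dsimp at hae
    have hfa : frob S - z = a := by omega
    exact hz (hfa ▸ ha.1)

theorem stmt15 (S : Set ℤ) (hS : IsNumericalSemigroup S)
    (hsym : SymmetricNS S) (he : (embdim S : ℤ) < mult S) :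
    (embdim S : ℤ) = mult S - 1 ↔ (AlmostSymmetric (dual S) ∧ 2 ≤ typ (dual S)) := by
  obtain ⟨hFnot, hFmax⟩ := frob_spec hS
  obtain ⟨hmS, hm0, hmmin⟩ := mult_spec hS
  have hnn := hS.1
  have h0S := hS.2.1
  have hadd := hS.2.2.1
  have hfin := hS.2.2.2
  have hFgt : ∀ z : ℤ, frob S < z → z ∈ S := fun z hz => by
    by_contra h; exact absurd (hFmax _ h) (not_le.mpr hz)
  have hm1 : 1 ≤ mult S := by have := hnn _ hmS; omega
  -- m is a minimal generator
  have hmgen : mult S ∈ minGens S := by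
    refine ⟨hmS, hm0, fun a ha b hb ha0 hb0 h => ?_⟩
    have h1 := hmmin a ha ha0
    have h2 := hmmin b hb hb0
    omega
  -- minimal generators are bounded
  have hgen_le : ∀ s ∈ minGens S, s = mult S ∨ s ≤ frob S + mult S := by
    intro s hs
    by_contra hcon
    push_neg at hcon
    obtain ⟨hsm, hsF⟩ := hcon
    have h2 : s - mult S ∈ S := hFgt _ (by omega)
    have h3 : s - mult S ≠ 0 := fun h => hsm (by omega)
    exact hs.2.2 (mult S) hmS (s - mult S) h2 hm0 h3 (by ring)
  have hgenfin : (minGens S).Finite := by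
    apply Set.Finite.subset (Set.finite_Icc (0:ℤ) (max (frob S + mult S) (mult S)))
    intro s hs
    have h1 : 0 ≤ s := hnn _ hs.1
    rcases hgen_le s hs with h | h
    · exact ⟨h1, le_trans (le_of_eq h) (le_max_right _ _)⟩
    · exact ⟨h1, le_trans h (le_max_left _ _)⟩
  have he1 : 1 ≤ embdim S := (Set.ncard_pos hgenfin).mpr ⟨mult S, hmgen⟩
  have hm2 : 2 ≤ mult S := by
    have : (1:ℤ) ≤ (embdim S : ℤ) := by exact_mod_cast he1
    omega
  have h1S : (1:ℤ) ∉ S := fun h => by have := hmmin _ h one_ne_zero; omega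
  have hF1 : 1 ≤ frob S := hFmax _ h1S
  -- a second minimal generator: the least element of S not divisible by m
  have hW : ∃ w : ℤ, (w ∈ S ∧ ¬ mult S ∣ w) ∧ ∀ z : ℤ, (z ∈ S ∧ ¬ mult S ∣ z) → w ≤ z := by
    apply Int.exists_least_of_bdd ⟨0, fun z hz => hnn _ hz.1⟩
    by_cases h : mult S ∣ frob S + 2
    · refine ⟨frob S + 3, hFgt _ (by omega), fun hd => ?_⟩
      have h2 := dvd_sub hd h
      have h1 : (frob S + 3) - (frob S + 2) = 1 := by ring
      rw [h1] at h2
      have := Int.le_of_dvd one_pos h2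
      omega
    · exact ⟨frob S + 2, hFgt _ (by omega), h⟩
  obtain ⟨w, ⟨hwS, hwnd⟩, hwmin⟩ := hW
  have hw0 : w ≠ 0 := fun h => hwnd (h ▸ dvd_zero (mult S))
  have hwgen : w ∈ minGens S := by
    refine ⟨hwS, hw0, fun a ha b hb ha0 hb0 hab => ?_⟩
    have hbm := hmmin b hb hb0
    have ham := hmmin a ha ha0
    by_cases hda : mult S ∣ a
    · have hdb : ¬ mult S ∣ b := fun hdb => hwnd (hab ▸ dvd_add hda hdb)
      have := hwmin b ⟨hb, hdb⟩; omega
    · have := hwmin a ⟨ha, hda⟩; omega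
  have hwm : w ≠ mult S := fun h => hwnd (h ▸ dvd_refl (mult S))
  have he2 : 2 ≤ embdim S :=
    (Set.one_lt_ncard hgenfin).mpr ⟨mult S, hmgen, w, hwgen, Ne.symm hwm⟩
  have hm3 : 3 ≤ mult S := by
    have : (2:ℤ) ≤ (embdim S : ℤ) := by exact_mod_cast he2
    omega
  have h2S : (2:ℤ) ∉ S := fun h => by have := hmmin _ h (by omega); omega
  have hF2 : 2 ≤ frob S := hFmax _ h2S
  have hsymm := symm_iff hS hsym
  -- F ≥ m + 1
  have hmF : mult S - 1 ≤ frob S := hFmax _ (fun h => by have := hmmin _ h (by omega); omega)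
  have hFne : frob S ≠ mult S - 1 := by
    intro h
    have h1 : frob S - 1 ∈ S := by
      by_contra hc
      exact h1S ((hsymm 1 (by omega) hF1).mpr hc)
    have := hmmin _ h1 (by omega)
    omega
  have hFm : mult S + 1 ≤ frob S := by
    have : frob S ≠ mult S := fun h => hFnot (h ▸ hmS)
    omega
  -- F + m is not a minimal generator
  have hFmgen : frob S + mult S ∉ minGens S := by
    intro hgen
    have hdesc : ∀ a ∈ S, mult S < a → a ≤ frob S → a - mult S ∈ S := by
      intro a ha ham haF
      by_contra hc
      have h1 : frob S - (a - mult S) ∈ S := by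
        by_contra hc2
        exact hc ((hsymm (a - mult S) (by omega) (by omega)).mpr hc2)
      exact hgen.2.2 a ha (frob S - (a - mult S)) h1 (by omega) (by omega) (by ring)
    have hdvd : ∀ n : ℕ, ∀ a : ℤ, a ∈ S → 0 < a → a ≤ frob S → a.toNat ≤ n → mult S ∣ a := by
      intro n
      induction n with
      | zero => intro a _ ha0 _ hn; exfalso; omega
      | succ n ih =>
        intro a ha ha0 haF hn
        rcases le_or_gt a (mult S) with h | h
        · have h1 : mult S ≤ a := hmmin a ha (by omega)
          have h2 : a = mult S := le_antisymm h h1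
          exact h2 ▸ dvd_refl (mult S)
        · have h1 : a - mult S ∈ S := hdesc a ha h haF
          have h2 := ih (a - mult S) h1 (by omega) (by omega) (by omega)
          have h3 := dvd_add h2 (dvd_refl (mult S))
          have h4 : a - mult S + mult S = a := by ring
          rwa [h4] at h3
    have hFm1 : frob S - 1 ∈ S := by
      by_contra hc; exact h1S ((hsymm 1 (by omega) (by omega)).mpr hc)
    have hFm2 : frob S - 2 ∈ S := by
      by_contra hc; exact h2S ((hsymm 2 (by omega) (by omega)).mpr hc)
    have hd1 : mult S ∣ frob S - 1 := hdvd (frob S - 1).toNat _ hFm1 (by omega) (by omega) le_rfl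
    have hd2 : mult S ∣ frob S - 2 := hdvd (frob S - 2).toNat _ hFm2 (by omega) (by omega) le_rfl
    have hd : mult S ∣ 1 := by
      have h := dvd_sub hd1 hd2
      have heq : (frob S - 1) - (frob S - 2) = 1 := by ring
      rwa [heq] at h
    have := Int.le_of_dvd one_pos hd
    omega
  -- every minimal generator is < F
  have hgenF : ∀ s ∈ minGens S, s < frob S := by
    intro s hs
    rcases lt_trichotomy s (frob S) with h | h | h
    · exact h
    · exact absurd (h ▸ hs.1) hFnot
    · exfalso
      have hsm : s - mult S ∉ S := by
        intro hc
        exact hs.2.2 (mult S) hmS (s - mult S) hc hm0 (by omega) (by ring)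
      have h4 : s - mult S ≤ frob S := hFmax _ hsm
      have h5 : frob S - (s - mult S) ∈ S := by
        by_contra hc
        exact hsm ((hsymm (s - mult S) (by omega) h4).mpr hc)
      have h6 : frob S - (s - mult S) = 0 := by
        by_contra hc
        have := hmmin _ h5 hc
        omega
      have h7 : s = frob S + mult S := by omega
      exact hFmgen (h7 ▸ hs)
  -- the dual is S ∪ {F}
  have hdual : dual S = S ∪ {frob S} := by
    ext z
    constructor
    · intro hz
      by_cases hzS : z ∈ S
      · exact Or.inl hzS
      · right
        rcases lt_or_ge z 0 with hneg | hpos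
        · exfalso
          have h1 : frob S - z ∈ S := hFgt _ (by omega)
          have h2 := hz (frob S - z) h1 (by omega)
          have h3 : z + (frob S - z) = frob S := by ring
          rw [h3] at h2
          exact hFnot h2.1
        · have hzF : z ≤ frob S := hFmax _ hzS
          rcases eq_or_lt_of_le hzF with heq | hlt
          · exact heq
          · exfalso
            have h1 : frob S - z ∈ S := by
              by_contra hc
              exact hzS ((hsymm z hpos hzF).mpr hc)
            have h2 := hz (frob S - z) h1 (by omega)
            have h3 : z + (frob S - z) = frob S := by ring
            rw [h3] at h2
            exact hFnot h2.1
    · rintro (hz | hz)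
      · intro h hh hh0
        have := hmmin h hh hh0
        exact ⟨hadd _ hz _ hh, by have := hnn _ hz; omega⟩
      · rw [Set.mem_singleton_iff] at hz
        subst hz
        intro h hh hh0
        have := hmmin h hh hh0
        exact ⟨hFgt _ (by omega), by omega⟩
  -- genus of the dual
  have hgenus_set : {z : ℤ | 0 ≤ z ∧ z ∉ dual S} = {z : ℤ | 0 ≤ z ∧ z ∉ S} \ {frob S} := by
    rw [hdual]
    ext z
    simp only [Set.mem_setOf_eq, Set.mem_diff, Set.mem_union, Set.mem_singleton_iff]
    constructor
    · rintro ⟨h1, h2⟩; exact ⟨⟨h1, fun h => h2 (Or.inl h)⟩, fun h => h2 (Or.inr h)⟩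
    · rintro ⟨⟨h1, h2⟩, h3⟩; exact ⟨h1, fun h => h.elim h2 h3⟩
  have hFmem : frob S ∈ {z : ℤ | 0 ≤ z ∧ z ∉ S} := ⟨by omega, hFnot⟩
  have hgd : genus (dual S) = genus S - 1 := by
    show {z : ℤ | 0 ≤ z ∧ z ∉ dual S}.ncard = genus S - 1
    rw [hgenus_set, Set.ncard_diff_singleton_of_mem hFmem]
    rfl
  have hg1 : 0 < genus S := (Set.ncard_pos hfin).mpr ⟨frob S, hFmem⟩
  -- frob of the dual
  have hTgt : ∀ z : ℤ, frob S - mult S < z → z ∈ dual S := by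
    intro z hz
    rw [hdual]
    by_cases h : z ∈ S
    · exact Or.inl h
    · have h1 : z ≤ frob S := hFmax _ h
      rcases eq_or_lt_of_le h1 with heq | hlt
      · exact Or.inr heq
      · exfalso
        have h2 : frob S - z ∉ S := by
          intro hc
          have := hmmin _ hc (by omega)
          omega
        exact h ((hsymm z (by omega) h1).mpr h2)
  have hFmnotT : frob S - mult S ∉ dual S := by
    rw [hdual]
    rintro (h | h)
    · have h2 := hadd _ h _ hmS
      have h3 : frob S - mult S + mult S = frob S := by ring
      rw [h3] at h2
      exact hFnot h2
    · rw [Set.mem_singleton_iff] at h; omega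
  have hfrobd : frob (dual S) = frob S - mult S := by
    have hG : IsGreatest {z : ℤ | z ∉ dual S} (frob S - mult S) :=
      ⟨hFmnotT, fun z hz => by by_contra hc; exact hz (hTgt z (by omega))⟩
    exact hG.csSup_eq
  have hSsubT : S ⊆ dual S := by rw [hdual]; exact Set.subset_union_left
  have hFT : frob S ∈ dual S := by rw [hdual]; exact Or.inr rfl
  -- PF of the dual
  have hPF : PF (dual S) = (fun s => frob S - s) '' (minGens S) := by
    ext x
    constructor
    · rintro ⟨hx1, hx2⟩
      have hxle : x ≤ frob S - mult S := by
        by_contra hc; exact hx1 (hTgt x (by omega))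
      have hx0 : 0 ≤ x := by
        by_contra hc
        push_neg at hc
        have h1 : frob S - mult S - x ∈ dual S := hTgt _ (by omega)
        have h2 := hx2 _ h1 (by omega)
        have h3 : x + (frob S - mult S - x) = frob S - mult S := by ring
        rw [h3] at h2
        exact hFmnotT h2
      have hxS : x ∉ S := fun h => hx1 (hSsubT h)
      have hxne : x ≠ 0 := fun h => hxS (h ▸ h0S)
      have hsS : frob S - x ∈ S := by
        by_contra hc
        exact hxS ((hsymm x hx0 (by omega)).mpr hc)
      refine ⟨frob S - x, ⟨hsS, by omega, ?_⟩, by dsimp; ring⟩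
      intro a ha b hb ha0 hb0 hab
      have hbm := hmmin b hb hb0
      have ham := hmmin a ha ha0
      have h1 := hx2 a (hSsubT ha) ha0
      have h2 : x + a = frob S - b := by omega
      rw [h2, hdual] at h1
      rcases h1 with h1 | h1
      · have h4 := (hsymm (frob S - b) (by omega) (by omega)).mp h1
        have h5 : frob S - (frob S - b) = b := by ring
        rw [h5] at h4
        exact h4 hb
      · rw [Set.mem_singleton_iff] at h1
        omega
    · rintro ⟨s, hs, rfl⟩
      obtain ⟨hsS, hs0, hsnd⟩ := hs
      have hsm := hmmin s hsS hs0
      have hsF : s < frob S := hgenF s ⟨hsS, hs0, hsnd⟩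
      have hsnn := hnn s hsS
      dsimp only
      constructor
      · rw [hdual]
        rintro (h | h)
        · exact ((hsymm s hsnn (by omega)).mp hsS) h
        · rw [Set.mem_singleton_iff] at h; omega
      · intro h hh hh0
        rw [hdual] at hh
        rcases hh with hh | hh
        · rcases lt_trichotomy h s with hlt | heq | hgt
          · have h1 : s - h ∉ S := by
              intro hc
              exact hsnd h hh (s - h) hc hh0 (by omega) (by ring)
            have hhm := hmmin h hh hh0
            have h2 : frob S - (s - h) ∈ S := by
              by_contra hc
              exact h1 ((hsymm (s - h) (by omega) (by omega)).mpr hc)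
            have h3 : frob S - s + h = frob S - (s - h) := by ring
            rw [h3]
            exact hSsubT h2
          · subst heq
            have h3 : frob S - h + h = frob S := by ring
            rw [h3]
            exact hFT
          · exact hSsubT (hFgt _ (by omega))
        · rw [Set.mem_singleton_iff] at hh
          subst hh
          exact hSsubT (hFgt _ (by omega))
  have htyp : typ (dual S) = embdim S := by
    show (PF (dual S)).ncard = (minGens S).ncard
    rw [hPF]
    exact Set.ncard_image_of_injOn (fun a _ b _ h => by omega)
  have hgenusd : (genus (dual S) : ℤ) = (genus S : ℤ) - 1 := by omega
  have hsym' : 2 * (genus S : ℤ) = frob S + 1 := hsym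
  constructor
  · intro heq
    constructor
    · show 2 * (genus (dual S) : ℤ) = frob (dual S) + (typ (dual S) : ℤ)
      rw [hfrobd]
      omega
    · omega
  · rintro ⟨hAS, _⟩
    have hAS' : 2 * (genus (dual S) : ℤ) = frob (dual S) + (typ (dual S) : ℤ) := hAS
    rw [hfrobd] at hAS'
    omega
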